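/- Proof template, discriminatory pricing: let λ > 0 and μ ≥ 0, fix a strategy space S_i for each bidder (either all non-increasing bid vectors or all uniform bid vectors), and suppose that for every valuation profile (v_1,…,v_n) with v_i ∈ V_i, every bidder i, and every finitely supported probability distribution P_{−i} over profiles b_{−i} of bids from the strategy spaces satisfying no-overbidding, there exists a bid vector b'_i ∈ S_i satisfying no-overbidding w.r.t. v_i such that E_{b_{−i}∼P_{−i}}[u_i^{v_i}(b'_i, b_{−i})] ≥ λ·v_i(x_i^v) − μ·E_{b_{−i}∼P_{−i}}[Σ_{j=1}^{x_i^v} β_j(b_{−i})]. Then under discriminatory pricing, for every finite product prior π and every Bayes-Nash equilibrium B whose strategies place all mass on no-overbidding bid vectors, E_{v∼π}[SW(v, x^v)] ≤ (max{1, μ}/λ) · E_{v∼π} E_{b∼B^v}[SW(v, x(b))]. -/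

import Mathlib

open Finset MeasureTheory

noncomputable section

/-- A bid vector for an auction of `k` units: entry `j` is the `(j+1)`-st marginal bid. -/
abbrev Bid (k : ℕ) := Fin k → ℝ

/-- Standard bid vectors: non-increasing and non-negative. -/
def StdBid {k : ℕ} (b : Bid k) : Prop :=
  (∀ j j' : Fin k, j ≤ j' → b j' ≤ b j) ∧ ∀ j, 0 ≤ b j

/-- Uniform bid vectors: a common value `c ≥ 0` on the first `q ≤ k` entries, `0` afterwards. -/
def UnifBid {k : ℕ} (b : Bid k) : Prop :=
  ∃ c : ℝ, 0 ≤ c ∧ ∃ q : ℕ, q ≤ k ∧ ∀ j : Fin k, b j = if (j : ℕ) < q then c else 0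

/-- A valuation on `{0,…,k}`: zero at `0`, non-negative and non-decreasing (up to `k`). -/
def IsValuation (k : ℕ) (v : ℕ → ℝ) : Prop :=
  v 0 = 0 ∧ (∀ x, 0 ≤ v x) ∧ ∀ x y : ℕ, x ≤ y → y ≤ k → v x ≤ v y

/-- Submodularity: non-increasing marginal values `v j - v (j-1)`. -/
def SubmodularVal (k : ℕ) (v : ℕ → ℝ) : Prop :=
  ∀ x y : ℕ, 1 ≤ x → x < y → y ≤ k → v y - v (y - 1) ≤ v x - v (x - 1)

/-- Subadditivity. -/
def SubadditiveVal (k : ℕ) (v : ℕ → ℝ) : Prop :=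
  ∀ x y : ℕ, x + y ≤ k → v (x + y) ≤ v x + v y

/-- `x` is a valid allocation for the bidding profile `b`:
all `k` units are allocated, and every winning bid is at least every losing bid. -/
def ValidAlloc {n k : ℕ} (b : Fin n → Bid k) (x : Fin n → ℕ) : Prop :=
  (∑ i, x i) = k ∧
  ∀ i i' : Fin n, ∀ j j' : Fin k, (j : ℕ) < x i → x i' ≤ (j' : ℕ) → b i' j' ≤ b i j

/-- The sum of the first `x` entries of a bid vector. -/
def winSum {k : ℕ} (b : Bid k) (x : ℕ) : ℝ :=
  ∑ j : Fin k, if (j : ℕ) < x then b j else 0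

/-- No-overbidding of the bid vector `b` with respect to the valuation `v`. -/
def NoOverbid {k : ℕ} (v : ℕ → ℝ) (b : Bid k) : Prop :=
  ∀ s : ℕ, 1 ≤ s → s ≤ k → winSum b s ≤ v s

/-- The `j`-th highest element of a multiset of reals (`j` is 1-indexed; default `0`). -/
def kthHighest (s : Multiset ℝ) (j : ℕ) : ℝ :=
  ((s.sort (· ≤ ·)).reverse).getD (j - 1) 0

/-- The multiset of all bids submitted under the profile `b`. -/
def allBids {n k : ℕ} (b : Fin n → Bid k) : Multiset ℝ :=
  (Finset.univ : Finset (Fin n × Fin k)).val.map fun p => b p.1 p.2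

/-- The multiset of all bids submitted by the bidders other than `i`. -/
def othersBids {n k : ℕ} (b : Fin n → Bid k) (i : Fin n) : Multiset ℝ :=
  ((Finset.univ : Finset (Fin n × Fin k)).filter (fun p => p.1 ≠ i)).val.map
    fun p => b p.1 p.2

/-- `β_j` (1-indexed): the `j`-th lowest among the `k` highest elements of `s`,
i.e. the `(k+1-j)`-th highest element of `s`. -/
def betaBid (k : ℕ) (s : Multiset ℝ) (j : ℕ) : ℝ := kthHighest s (k + 1 - j)

/-- `∑_{j=1}^{x} β_j(s)`. -/
def betaSum (k : ℕ) (s : Multiset ℝ) (x : ℕ) : ℝ := ∑ j ∈ Finset.Icc 1 x, betaBid k s j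

/-- The uniform price: the `(k+1)`-st highest of all submitted bids (`0` by default). -/
def price {n k : ℕ} (b : Fin n → Bid k) : ℝ := kthHighest (allBids b) (k + 1)

/-- Discriminatory-pricing utility of bidder `i` under the allocation rule `X`. -/
def uDisc {n k : ℕ} (X : (Fin n → Bid k) → Fin n → ℕ) (v : ℕ → ℝ) (i : Fin n)
    (b : Fin n → Bid k) : ℝ :=
  v (X b i) - winSum (b i) (X b i)

/-- Uniform-pricing utility of bidder `i` under the allocation rule `X`. -/
def uUnif {n k : ℕ} (X : (Fin n → Bid k) → Fin n → ℕ) (v : ℕ → ℝ) (i : Fin n)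
    (b : Fin n → Bid k) : ℝ :=
  v (X b i) - (X b i : ℝ) * price b

/-- The `x`-th entry (1-indexed) of a bid vector, with the convention that it is `0`
for `x = 0` (or `x > k`). -/
def lastWinBid {k : ℕ} (b : Bid k) (x : ℕ) : ℝ :=
  if h : 1 ≤ x ∧ x ≤ k then b ⟨x - 1, by omega⟩ else 0

/-- Social welfare of the allocation `x` under the valuation profile `v`. -/
def SW {n : ℕ} (v : Fin n → ℕ → ℝ) (x : Fin n → ℕ) : ℝ := ∑ i, v i (x i)


section AuxMultiset

def sortDesc (s : Multiset ℝ) : List ℝ := (s.sort (· ≤ ·)).reverse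

lemma kthHighest_def (s : Multiset ℝ) (j : ℕ) : kthHighest s j = (sortDesc s).getD (j-1) 0 := rfl

lemma mem_sortDesc {a : ℝ} {s : Multiset ℝ} : a ∈ sortDesc s ↔ a ∈ s := by
  simp [sortDesc]

lemma sortDesc_sorted (s : Multiset ℝ) : (sortDesc s).Pairwise (· ≥ ·) := by
  have h := Multiset.pairwise_sort s (· ≤ ·)
  simpa [sortDesc, List.pairwise_reverse] using h

lemma getD_nonneg {l : List ℝ} (h : ∀ x ∈ l, 0 ≤ x) (m : ℕ) : 0 ≤ l.getD m 0 := by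
  rcases lt_or_ge m l.length with hm | hm
  · rw [List.getD_eq_getElem l 0 hm]; exact h _ (List.getElem_mem hm)
  · rw [List.getD_eq_default l 0 hm]

lemma sorted_getD_anti {l : List ℝ} (hl : l.Pairwise (· ≥ ·)) (h0 : ∀ x ∈ l, 0 ≤ x)
    {m m' : ℕ} (h : m ≤ m') : l.getD m' 0 ≤ l.getD m 0 := by
  rcases lt_or_ge m' l.length with hm' | hm'
  · have hm : m < l.length := lt_of_le_of_lt h hm'
    rw [List.getD_eq_getElem l 0 hm', List.getD_eq_getElem l 0 hm]
    rcases eq_or_lt_of_le h with rfl | hlt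
    · exact le_refl _
    · exact List.pairwise_iff_get.1 hl ⟨m, hm⟩ ⟨m', hm'⟩ hlt
  · rw [List.getD_eq_default l 0 hm']
    exact getD_nonneg h0 m

lemma kthHighest_nonneg {s : Multiset ℝ} (h : ∀ x ∈ s, 0 ≤ x) (j : ℕ) :
    0 ≤ kthHighest s j :=
  getD_nonneg (fun x hx => h x (mem_sortDesc.1 hx)) _

lemma kthHighest_anti {s : Multiset ℝ} (h : ∀ x ∈ s, 0 ≤ x) {j j' : ℕ} (hj : j ≤ j') :
    kthHighest s j' ≤ kthHighest s j :=
  sorted_getD_anti (sortDesc_sorted s) (fun x hx => h x (mem_sortDesc.1 hx))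
    (Nat.sub_le_sub_right hj 1)

lemma sortDesc_cons_max {a : ℝ} {s : Multiset ℝ} (h : ∀ x ∈ s, x ≤ a) :
    sortDesc (a ::ₘ s) = a :: sortDesc s := by
  have hperm : Multiset.sort (a ::ₘ s) (· ≤ ·) |>.Perm (Multiset.sort s (· ≤ ·) ++ [a]) := by
    refine (Multiset.coe_eq_coe).1 ?_
    rw [← Multiset.coe_add, Multiset.sort_eq, Multiset.sort_eq, add_comm]
    rfl
  have hs2 : (Multiset.sort s (· ≤ ·) ++ [a]).Pairwise (· ≤ ·) := by
    rw [List.pairwise_append]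
    refine ⟨Multiset.pairwise_sort _ _, List.pairwise_singleton _ a, ?_⟩
    intro x hx b hb
    rw [List.mem_singleton] at hb
    subst hb
    exact h x (by simpa using hx)
  have h1 : Multiset.sort (a ::ₘ s) (· ≤ ·) = Multiset.sort s (· ≤ ·) ++ [a] :=
    List.Perm.eq_of_pairwise' (Multiset.pairwise_sort _ _) hs2 hperm
  simp [sortDesc, h1]

lemma kthHighest_cons_one {a : ℝ} {s : Multiset ℝ} (h : ∀ x ∈ s, x ≤ a) :
    kthHighest (a ::ₘ s) 1 = a := by
  rw [kthHighest_def, sortDesc_cons_max h]; rfl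

lemma kthHighest_cons_succ {a : ℝ} {s : Multiset ℝ} (h : ∀ x ∈ s, x ≤ a) {j : ℕ}
    (hj : 1 ≤ j) : kthHighest (a ::ₘ s) (j + 1) = kthHighest s j := by
  rw [kthHighest_def, kthHighest_def, sortDesc_cons_max h]
  obtain ⟨j', rfl⟩ : ∃ j', j = j' + 1 := ⟨j - 1, by omega⟩
  simp

lemma exists_max {s : Multiset ℝ} (hs : s ≠ 0) : ∃ a ∈ s, ∀ x ∈ s, x ≤ a := by
  induction s using Multiset.induction_on with
  | empty => exact absurd rfl hs
  | cons a t ih =>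
    rcases eq_or_ne t 0 with rfl | ht
    · exact ⟨a, Multiset.mem_cons_self a 0, by simp⟩
    · obtain ⟨b, hb, hbmax⟩ := ih ht
      refine ⟨max a b, ?_, ?_⟩
      · rcases le_total a b with hab | hab
        · simp [max_eq_right hab, Multiset.mem_cons_of_mem hb]
        · simp [max_eq_left hab]
      · intro x hx
        rcases Multiset.mem_cons.1 hx with rfl | hx
        · exact le_max_left _ _
        · exact le_trans (hbmax x hx) (le_max_right _ _)

lemma erase_max_le_erase_max {s t : Multiset ℝ} (hst : s ≤ t) {a b : ℝ}
    (ha : a ∈ s) (hamax : ∀ x ∈ s, x ≤ a) (hbmax : ∀ x ∈ t, x ≤ b) :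
    s.erase a ≤ t.erase b := by
  rw [Multiset.le_iff_count]
  intro c
  have hcount : ∀ c, Multiset.count c s ≤ Multiset.count c t :=
    fun c => Multiset.count_le_of_le c hst
  by_cases hcb : c = b
  · subst hcb
    by_cases hab : a = c
    · subst hab
      rw [Multiset.count_erase_self, Multiset.count_erase_self]
      exact Nat.sub_le_sub_right (hcount a) 1
    · have hcs : c ∉ s := by
        intro hcs
        exact hab (le_antisymm (hbmax a (Multiset.mem_of_le hst ha)) (hamax c hcs))
      have h1 : Multiset.count c (s.erase a) ≤ Multiset.count c s :=
        Multiset.count_le_of_le c (Multiset.erase_le a s)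
      rw [Multiset.count_eq_zero_of_notMem hcs] at h1
      omega
  · rw [Multiset.count_erase_of_ne hcb]
    exact le_trans (Multiset.count_le_of_le c (Multiset.erase_le a s)) (hcount c)

lemma kthHighest_zero (j : ℕ) : kthHighest 0 j = 0 := by
  rw [kthHighest_def]
  simp [sortDesc]

lemma kthHighest_mono {s t : Multiset ℝ} (hst : s ≤ t) (ht0 : ∀ x ∈ t, 0 ≤ x)
    {j : ℕ} (hj : 1 ≤ j) : kthHighest s j ≤ kthHighest t j := by
  obtain ⟨j', rfl⟩ : ∃ j', j = j' + 1 := ⟨j - 1, by omega⟩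
  clear hj
  induction j' generalizing s t with
  | zero =>
    rcases eq_or_ne s 0 with rfl | hs
    · rw [kthHighest_zero]; exact kthHighest_nonneg ht0 1
    · obtain ⟨a, ha, hamax⟩ := exists_max hs
      have ht : t ≠ 0 := by
        intro h; subst h
        exact absurd (Multiset.le_zero.1 hst) hs
      obtain ⟨b, hb, hbmax⟩ := exists_max ht
      have h1 : kthHighest s 1 = a := by
        rw [← Multiset.cons_erase ha]
        exact kthHighest_cons_one (fun x hx => hamax x (Multiset.mem_of_mem_erase hx))
      have h2 : kthHighest t 1 = b := by
        rw [← Multiset.cons_erase hb]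
        exact kthHighest_cons_one (fun x hx => hbmax x (Multiset.mem_of_mem_erase hx))
      rw [h1, h2]
      exact hbmax a (Multiset.mem_of_le hst ha)
  | succ m ih =>
    rcases eq_or_ne s 0 with rfl | hs
    · rw [kthHighest_zero]; exact kthHighest_nonneg ht0 _
    · obtain ⟨a, ha, hamax⟩ := exists_max hs
      have ht : t ≠ 0 := by
        intro h; subst h
        exact absurd (Multiset.le_zero.1 hst) hs
      obtain ⟨b, hb, hbmax⟩ := exists_max ht
      have h1 : kthHighest s (m + 1 + 1) = kthHighest (s.erase a) (m + 1) := by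
        conv_lhs => rw [← Multiset.cons_erase ha]
        exact kthHighest_cons_succ
          (fun x hx => hamax x (Multiset.mem_of_mem_erase hx)) (by omega)
      have h2 : kthHighest t (m + 1 + 1) = kthHighest (t.erase b) (m + 1) := by
        conv_lhs => rw [← Multiset.cons_erase hb]
        exact kthHighest_cons_succ
          (fun x hx => hbmax x (Multiset.mem_of_mem_erase hx)) (by omega)
      rw [h1, h2]
      exact ih (erase_max_le_erase_max hst ha hamax hbmax)
        (fun x hx => ht0 x (Multiset.mem_of_mem_erase hx))

def topSum (s : Multiset ℝ) (m : ℕ) : ℝ := ∑ j ∈ Finset.Icc 1 m, kthHighest s j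

lemma topSum_succ (s : Multiset ℝ) (a : ℝ) (h : ∀ x ∈ s, x ≤ a) (m : ℕ) :
    topSum (a ::ₘ s) (m + 1) = a + topSum s m := by
  unfold topSum
  have hsplit : Finset.Icc 1 (m+1) = Finset.Ioc 0 (m+1) := by
    exact Finset.Icc_add_one_left_eq_Ioc 0 (m+1)
  rw [hsplit, ← Finset.sum_Ioc_consecutive _ (Nat.zero_le 1) (by omega : 1 ≤ m + 1)]
  congr 1
  · have : Finset.Ioc 0 1 = {1} := rfl
    rw [this, Finset.sum_singleton, kthHighest_cons_one h]
  · have hmap : Finset.Ioc 1 (m+1) = (Finset.Ioc 0 m).map (addLeftEmbedding 1) := by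
      rw [Finset.map_add_left_Ioc]
      congr 1 <;> omega
    rw [hmap, Finset.sum_map, ← Finset.Icc_add_one_left_eq_Ioc]
    apply Finset.sum_congr rfl
    intro j hj
    rw [Finset.mem_Icc] at hj
    have : (addLeftEmbedding 1) j = j + 1 := by
      simp [addLeftEmbedding, add_comm]
    rw [this, kthHighest_cons_succ h (by omega)]

lemma topSum_le_sum (k : ℕ) (W L : Multiset ℝ) (hcard : Multiset.card W = k)
    (hsep : ∀ w ∈ W, ∀ l ∈ L, l ≤ w) : topSum (W + L) k ≤ W.sum := by
  induction k generalizing W L with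
  | zero =>
    have : W = 0 := Multiset.card_eq_zero.1 hcard
    subst this
    simp [topSum]
  | succ m ih =>
    have hW : W ≠ 0 := by
      intro h; subst h; simp at hcard
    obtain ⟨a, ha, hamax⟩ := exists_max hW
    have hmax : ∀ x ∈ W.erase a + L, x ≤ a := by
      intro x hx
      rcases Multiset.mem_add.1 hx with hx | hx
      · exact hamax x (Multiset.mem_of_mem_erase hx)
      · exact hsep a ha x hx
    have hdec : W + L = a ::ₘ (W.erase a + L) := by
      rw [← Multiset.cons_add, Multiset.cons_erase ha]
    rw [hdec, topSum_succ _ a hmax]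
    have hs : (W.erase a).sum + a = W.sum := by
      conv_rhs => rw [← Multiset.cons_erase ha]
      rw [Multiset.sum_cons]; ring
    have := ih (W.erase a) L (by rw [Multiset.card_erase_of_mem ha, hcard]; rfl)
      (fun w hw l hl => hsep w (Multiset.mem_of_mem_erase hw) l hl)
    linarith

lemma betaSum_k_eq_topSum (k : ℕ) (s : Multiset ℝ) : betaSum k s k = topSum s k := by
  unfold betaSum topSum betaBid
  refine Finset.sum_bij' (fun j _ => k + 1 - j) (fun j _ => k + 1 - j) ?_ ?_ ?_ ?_ ?_ <;>
    simp only [Finset.mem_Icc] <;> intro a ha <;> first | omega | trivial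

lemma betaSum_mono_multiset {k : ℕ} {s t : Multiset ℝ} (hst : s ≤ t)
    (ht0 : ∀ x ∈ t, 0 ≤ x) {x : ℕ} (hx : x ≤ k) :
    betaSum k s x ≤ betaSum k t x := by
  apply Finset.sum_le_sum
  intro j hj
  rw [Finset.mem_Icc] at hj
  exact kthHighest_mono hst ht0 (by omega)

lemma betaSum_superadd {k : ℕ} {s : Multiset ℝ} (h0 : ∀ x ∈ s, 0 ≤ x) {x y : ℕ}
    (hxy : x + y ≤ k) : betaSum k s x + betaSum k s y ≤ betaSum k s (x + y) := by
  have key : ∀ j ∈ Finset.Icc 1 x, betaBid k s j ≤ betaBid k s (j + y) := by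
    intro j hj
    rw [Finset.mem_Icc] at hj
    exact kthHighest_anti h0 (by omega)
  have h1 : betaSum k s x ≤ ∑ j ∈ Finset.Icc 1 x, betaBid k s (j + y) :=
    Finset.sum_le_sum key
  have h2 : ∑ j ∈ Finset.Icc 1 x, betaBid k s (j + y)
      = ∑ j ∈ Finset.Icc (y + 1) (x + y), betaBid k s j := by
    have hmap : Finset.Icc (y + 1) (x + y) = (Finset.Icc 1 x).map (addRightEmbedding y) := by
      rw [Finset.map_add_right_Icc]
      congr 1
      omega
    rw [hmap, Finset.sum_map]
    rfl
  have h3 : betaSum k s y + ∑ j ∈ Finset.Icc (y + 1) (x + y), betaBid k s j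
      = betaSum k s (x + y) := by
    unfold betaSum
    rw [show Finset.Icc 1 y = Finset.Ioc 0 y from Finset.Icc_add_one_left_eq_Ioc 0 y,
      show Finset.Icc (y + 1) (x + y) = Finset.Ioc y (x + y) from Finset.Icc_add_one_left_eq_Ioc y (x + y),
      show Finset.Icc 1 (x + y) = Finset.Ioc 0 (x + y) from Finset.Icc_add_one_left_eq_Ioc 0 (x + y)]
    exact Finset.sum_Ioc_consecutive _ (Nat.zero_le y) (by omega)
  linarith

lemma betaSum_zero_right (k : ℕ) (s : Multiset ℝ) : betaSum k s 0 = 0 := by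
  simp [betaSum]

lemma sum_betaSum_le {n k : ℕ} {s : Multiset ℝ} (h0 : ∀ x ∈ s, 0 ≤ x)
    (x : Fin n → ℕ) (hx : ∑ i, x i ≤ k) :
    ∑ i, betaSum k s (x i) ≤ betaSum k s (∑ i, x i) := by
  have key : ∀ (F : Finset (Fin n)), (∑ i ∈ F, x i) ≤ k →
      ∑ i ∈ F, betaSum k s (x i) ≤ betaSum k s (∑ i ∈ F, x i) := by
    intro F
    induction F using Finset.cons_induction with
    | empty => intro _; simp [betaSum_zero_right]
    | cons a F ha ih =>
      intro hsum
      rw [Finset.sum_cons, Finset.sum_cons]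
      rw [Finset.sum_cons] at hsum
      calc betaSum k s (x a) + ∑ i ∈ F, betaSum k s (x i)
          ≤ betaSum k s (x a) + betaSum k s (∑ i ∈ F, x i) := by
            have := ih (by omega)
            linarith
        _ ≤ betaSum k s (x a + ∑ i ∈ F, x i) := betaSum_superadd h0 hsum
  exact key Finset.univ hx
lemma range_filter_lt (m k : ℕ) (hm : m ≤ k) :
    Finset.filter (· < m) (Finset.range k) = Finset.range m := by
  ext j
  simp only [Finset.mem_filter, Finset.mem_range]
  omega

lemma sum_ite_lt (m k : ℕ) (hm : m ≤ k) :
    (∑ j : Fin k, if (j : ℕ) < m then (1 : ℕ) else 0) = m := by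
  rw [Fin.sum_univ_eq_sum_range (fun j => if j < m then (1:ℕ) else 0) k]
  rw [← Finset.card_filter, range_filter_lt m k hm, Finset.card_range]

lemma core {n k : ℕ} (b : Fin n → Bid k) (hb : ∀ i j, 0 ≤ b i j) (x xo : Fin n → ℕ)
    (hxk : ∑ i, x i = k)
    (hsep : ∀ (i i' : Fin n) (j j' : Fin k), (j:ℕ) < x i → x i' ≤ (j':ℕ) → b i' j' ≤ b i j)
    (hxo : ∑ i, xo i = k) :
    ∑ i, betaSum k (othersBids b i) (xo i) ≤ ∑ i, winSum (b i) (x i) := by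
  classical
  have hall0 : ∀ y ∈ allBids b, 0 ≤ y := by
    intro y hy
    rw [allBids, Multiset.mem_map] at hy
    obtain ⟨p, _, rfl⟩ := hy
    exact hb p.1 p.2
  have hoth : ∀ i, othersBids b i ≤ allBids b := by
    intro i
    rw [othersBids, allBids, Finset.filter_val]
    exact Multiset.map_le_map (Multiset.filter_le _ _)
  have hxo_le : ∀ i, xo i ≤ k := by
    intro i
    rw [← hxo]
    exact Finset.single_le_sum (fun i _ => Nat.zero_le _) (Finset.mem_univ i)
  have hx_le : ∀ i, x i ≤ k := by
    intro i
    rw [← hxk]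
    exact Finset.single_le_sum (fun i _ => Nat.zero_le _) (Finset.mem_univ i)
  have step1 : ∑ i, betaSum k (othersBids b i) (xo i)
      ≤ ∑ i, betaSum k (allBids b) (xo i) :=
    Finset.sum_le_sum fun i _ => betaSum_mono_multiset (hoth i) hall0 (hxo_le i)
  have step2 : ∑ i, betaSum k (allBids b) (xo i) ≤ betaSum k (allBids b) k := by
    have := sum_betaSum_le hall0 xo (le_of_eq hxo)
    rwa [hxo] at this
  set P : Fin n × Fin k → Prop := fun p => (p.2 : ℕ) < x p.1 with hP
  set Wm : Multiset ℝ := ((Finset.univ.filter P).val).map (fun p => b p.1 p.2) with hWm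
  set Lm : Multiset ℝ :=
    ((Finset.univ.filter (fun p => ¬ P p)).val).map (fun p => b p.1 p.2) with hLm
  have hdec : allBids b = Wm + Lm := by
    rw [allBids, hWm, hLm, ← Multiset.map_add]
    congr 1
    rw [Finset.filter_val, Finset.filter_val, Multiset.filter_add_not]
  have hcard : Multiset.card Wm = k := by
    rw [hWm, Multiset.card_map]
    have h1 : Multiset.card (Finset.univ.filter P).val = (Finset.univ.filter P).card := rfl
    rw [h1, Finset.card_filter]
    rw [Fintype.sum_prod_type]
    have h2 : ∀ i : Fin n, (∑ j : Fin k, if P (i, j) then 1 else 0) = x i := by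
      intro i
      simp only [hP]
      exact sum_ite_lt (x i) k (hx_le i)
    calc (∑ i : Fin n, ∑ j : Fin k, if P (i, j) then 1 else 0) = ∑ i, x i :=
          Finset.sum_congr rfl fun i _ => h2 i
      _ = k := hxk
  have hsep' : ∀ w ∈ Wm, ∀ l ∈ Lm, l ≤ w := by
    intro w hw l hl
    rw [hWm, Multiset.mem_map] at hw
    rw [hLm, Multiset.mem_map] at hl
    obtain ⟨p, hp, rfl⟩ := hw
    obtain ⟨p', hp', rfl⟩ := hl
    rw [Finset.mem_val, Finset.mem_filter] at hp hp'
    simp only [hP] at hp hp'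
    exact hsep p.1 p'.1 p.2 p'.2 hp.2 (Nat.le_of_not_lt hp'.2)
  have step3 : betaSum k (allBids b) k ≤ Wm.sum := by
    rw [betaSum_k_eq_topSum, hdec]
    exact topSum_le_sum k Wm Lm hcard hsep'
  have step4 : Wm.sum = ∑ i, winSum (b i) (x i) := by
    rw [hWm]
    have h1 : (((Finset.univ.filter P).val).map (fun p : Fin n × Fin k => b p.1 p.2)).sum
        = ∑ p ∈ Finset.univ.filter P, b p.1 p.2 := rfl
    rw [h1, Finset.sum_filter, Fintype.sum_prod_type]
    rfl
  calc ∑ i, betaSum k (othersBids b i) (xo i)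
      ≤ ∑ i, betaSum k (allBids b) (xo i) := step1
    _ ≤ betaSum k (allBids b) k := step2
    _ ≤ Wm.sum := step3
    _ = ∑ i, winSum (b i) (x i) := step4


lemma othersBids_congr {n k : ℕ} (b b' : Fin n → Bid k) (i : Fin n)
    (h : ∀ j, j ≠ i → b j = b' j) : othersBids b i = othersBids b' i := by
  unfold othersBids
  refine Multiset.map_congr rfl fun p hp => ?_
  rw [Finset.mem_val, Finset.mem_filter] at hp
  rw [h p.1 hp.2]

lemma winSum_nonneg' {k : ℕ} (b : Bid k) (hb : ∀ j, 0 ≤ b j) (m : ℕ) : 0 ≤ winSum b m := by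
  refine Finset.sum_nonneg fun j _ => ?_
  by_cases h : (j : ℕ) < m <;> simp [h, hb j]

lemma winSum_le_val {k : ℕ} (v : ℕ → ℝ) (hv : IsValuation k v) (b : Bid k)
    (hnob : NoOverbid v b) {m : ℕ} (hm : m ≤ k) : winSum b m ≤ v m := by
  rcases Nat.eq_zero_or_pos m with rfl | hm1
  · have : winSum b 0 = 0 := by
      refine Finset.sum_eq_zero fun j _ => by simp
    rw [this, hv.1]
  · exact hnob m hm1 hm

end AuxMultiset

section AuxProb

variable {n : ℕ}

lemma sum_invol {α : Type*} [Fintype α] (e : α → α) (he : ∀ x, e (e x) = x) (f : α → ℝ) :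
    ∑ x, f (e x) = ∑ x, f x :=
  Fintype.sum_bijective e (Function.Involutive.bijective he) _ _ (fun _ => rfl)

lemma prod_update_eq {T : Fin n → Type*} (p : ∀ j, T j → ℝ) (θ : ∀ j, T j) (i : Fin n)
    (a : T i) :
    (∏ j, p j (Function.update θ i a j))
      = p i a * ∏ j ∈ Finset.univ.erase i, p j (θ j) := by
  rw [← Finset.mul_prod_erase Finset.univ _ (Finset.mem_univ i)]
  congr 1
  · rw [Function.update_self]
  · refine Finset.prod_congr rfl fun j hj => ?_
    rw [Function.update_of_ne (Finset.ne_of_mem_erase hj)]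

lemma sum_pi_prod {T : Fin n → Type*} [∀ j, Fintype (T j)] (p : ∀ j, T j → ℝ) :
    (∑ θ : ∀ j, T j, ∏ j, p j (θ j)) = ∏ j, ∑ a, p j a := by
  rw [Finset.prod_univ_sum]
  rw [← Fintype.piFinset_univ]

lemma sum_pi_prod_one {T : Fin n → Type*} [∀ j, Fintype (T j)] (p : ∀ j, T j → ℝ)
    (hp : ∀ j, ∑ a, p j a = 1) : (∑ θ : ∀ j, T j, ∏ j, p j (θ j)) = 1 := by
  rw [sum_pi_prod]
  exact Finset.prod_eq_one fun j _ => hp j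

lemma inv_swap {O : Fin n → Type*} [∀ j, Fintype (O j)] (i : Fin n)
    (g1 g2 : O i → ℝ) (Q : (∀ j, O j) → ℝ)
    (hQ : ∀ ω a, Q (Function.update ω i a) = Q ω) :
    (∑ a, g1 a) * (∑ ω : ∀ j, O j, g2 (ω i) * Q ω)
      = (∑ a, g2 a) * (∑ ω : ∀ j, O j, g1 (ω i) * Q ω) := by
  have key : (∑ x : O i × (∀ j, O j), g1 x.1 * (g2 (x.2 i) * Q x.2))
      = ∑ x : O i × (∀ j, O j), g2 x.1 * (g1 (x.2 i) * Q x.2) := by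
    have he : ∀ x : O i × (∀ j, O j),
        (fun x : O i × (∀ j, O j) => (x.2 i, Function.update x.2 i x.1))
          ((fun x : O i × (∀ j, O j) => (x.2 i, Function.update x.2 i x.1)) x) = x := by
      intro x
      simp [Function.update_idem, Function.update_self, Function.update_eq_self]
    have := sum_invol (fun x : O i × (∀ j, O j) => (x.2 i, Function.update x.2 i x.1)) he
      (fun x : O i × (∀ j, O j) => g2 x.1 * (g1 (x.2 i) * Q x.2))
    rw [← this]
    refine Finset.sum_congr rfl fun x _ => ?_
    simp only [Function.update_self]
    rw [hQ]
    ring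
  rw [Fintype.sum_prod_type, Fintype.sum_prod_type] at key
  simp only [← Finset.sum_mul, ← Finset.mul_sum] at key
  exact key

lemma prod_erase_update {T : Fin n → Type*} (p : ∀ j, T j → ℝ) (θ : ∀ j, T j) (i : Fin n)
    (a : T i) :
    (∏ j ∈ Finset.univ.erase i, p j (Function.update θ i a j))
      = ∏ j ∈ Finset.univ.erase i, p j (θ j) :=
  Finset.prod_congr rfl fun j hj => by
    rw [Function.update_of_ne (Finset.ne_of_mem_erase hj)]

lemma coord_marg {T : Fin n → Type*} [∀ j, Fintype (T j)] (p : ∀ j, T j → ℝ)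
    (hp : ∀ j, ∑ a, p j a = 1) (i : Fin n) (g : T i → ℝ) :
    (∑ θ : ∀ j, T j, (∏ j, p j (θ j)) * g (θ i)) = ∑ t, p i t * g t := by
  have hQ : ∀ (θ : ∀ j, T j) (a : T i),
      (∏ j ∈ Finset.univ.erase i, p j (Function.update θ i a j))
        = ∏ j ∈ Finset.univ.erase i, p j (θ j) := fun θ a => prod_erase_update p θ i a
  have h1 : (∑ θ : ∀ j, T j, (∏ j, p j (θ j)) * g (θ i))
      = ∑ θ : ∀ j, T j, (fun a => p i a * g a) (θ i) *
          (∏ j ∈ Finset.univ.erase i, p j (θ j)) := by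
    refine Finset.sum_congr rfl fun θ _ => ?_
    rw [← Finset.mul_prod_erase Finset.univ _ (Finset.mem_univ i)]
    ring
  have h2 := inv_swap i (p i) (fun a => p i a * g a)
    (fun θ => ∏ j ∈ Finset.univ.erase i, p j (θ j)) hQ
  rw [hp i, one_mul] at h2
  have h3 : (∑ ω : ∀ j, T j, p i (ω i) * ∏ j ∈ Finset.univ.erase i, p j (ω j)) = 1 := by
    rw [← sum_pi_prod_one p hp]
    refine Finset.sum_congr rfl fun θ _ => ?_
    rw [← Finset.mul_prod_erase Finset.univ _ (Finset.mem_univ i)]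
  rw [h3, mul_one] at h2
  rw [h1, h2]

lemma update_marg {T : Fin n → Type*} [∀ j, Fintype (T j)] (p : ∀ j, T j → ℝ)
    (hp : ∀ j, ∑ a, p j a = 1) (i : Fin n) (F : (∀ j, T j) → ℝ) :
    (∑ t, p i t * ∑ σ : ∀ j, T j, (∏ j, p j (σ j)) * F (Function.update σ i t))
      = ∑ σ : ∀ j, T j, (∏ j, p j (σ j)) * F σ := by
  classical
  have key : ∀ t : T i,
      (∑ σ : ∀ j, T j, (∏ j, p j (σ j)) * F (Function.update σ i t))
        = ∑ σ : ∀ j, T j, (if σ i = t then 1 else 0) *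
            ((∏ j ∈ Finset.univ.erase i, p j (σ j)) * F σ) := by
    intro t
    have hQ : ∀ (σ : ∀ j, T j) (a : T i),
        ((∏ j ∈ Finset.univ.erase i, p j (Function.update σ i a j)) *
          F (Function.update (Function.update σ i a) i t))
          = (∏ j ∈ Finset.univ.erase i, p j (σ j)) * F (Function.update σ i t) := by
      intro σ a
      rw [prod_erase_update, Function.update_idem]
    have h2 := inv_swap i (fun a => if a = t then (1:ℝ) else 0) (p i)
      (fun σ => (∏ j ∈ Finset.univ.erase i, p j (σ j)) * F (Function.update σ i t)) hQ
    rw [hp i] at h2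
    have hδ : (∑ a : T i, if a = t then (1:ℝ) else 0) = 1 := by simp
    rw [hδ, one_mul, one_mul] at h2
    beta_reduce at h2
    have h1 : (∑ σ : ∀ j, T j, (∏ j, p j (σ j)) * F (Function.update σ i t))
        = ∑ σ : ∀ j, T j, p i (σ i) *
            ((∏ j ∈ Finset.univ.erase i, p j (σ j)) * F (Function.update σ i t)) := by
      refine Finset.sum_congr rfl fun σ _ => ?_
      rw [← Finset.mul_prod_erase Finset.univ _ (Finset.mem_univ i)]
      ring
    rw [h1, h2]
    refine Finset.sum_congr rfl fun σ _ => ?_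
    by_cases h : σ i = t
    · have h' : Function.update σ i t = σ := by
        rw [← h, Function.update_eq_self]
      rw [h']
    · simp [h]
  have h4 : (∑ t, p i t * ∑ σ : ∀ j, T j, (∏ j, p j (σ j)) * F (Function.update σ i t))
      = ∑ t, ∑ σ : ∀ j, T j, p i t * ((if σ i = t then 1 else 0) *
          ((∏ j ∈ Finset.univ.erase i, p j (σ j)) * F σ)) := by
    refine Finset.sum_congr rfl fun t _ => ?_
    rw [key t, Finset.mul_sum]
  rw [h4, Finset.sum_comm]
  refine Finset.sum_congr rfl fun σ _ => ?_
  have h5 : ∀ t : T i, p i t * ((if σ i = t then (1:ℝ) else 0) *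
      ((∏ j ∈ Finset.univ.erase i, p j (σ j)) * F σ))
      = if σ i = t then p i t * ((∏ j ∈ Finset.univ.erase i, p j (σ j)) * F σ) else 0 := by
    intro t
    by_cases h : σ i = t <;> simp [h]
  rw [Finset.sum_congr rfl fun t _ => h5 t, Finset.sum_ite_eq Finset.univ (σ i)
    (fun t => p i t * ((∏ j ∈ Finset.univ.erase i, p j (σ j)) * F σ))]
  simp only [Finset.mem_univ, if_true]
  rw [← Finset.mul_prod_erase Finset.univ (fun j => p j (σ j)) (Finset.mem_univ i)]
  ring

lemma marg {T : Fin n → Type*} [∀ j, Fintype (T j)] (p : ∀ j, T j → ℝ)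
    (hp : ∀ j, ∑ a, p j a = 1) (i : Fin n) (F : (∀ j, T j) → ℝ) :
    (∑ θ : ∀ j, T j, (∏ j, p j (θ j)) *
        ∑ σ : ∀ j, T j, (∏ j, p j (σ j)) * F (Function.update σ i (θ i)))
      = ∑ σ : ∀ j, T j, (∏ j, p j (σ j)) * F σ := by
  rw [coord_marg p hp i
    (fun t => ∑ σ : ∀ j, T j, (∏ j, p j (σ j)) * F (Function.update σ i t))]
  exact update_marg p hp i F

lemma repl_left {O : Fin n → Type*} [∀ j, Fintype (O j)] (w : ∀ j, O j → ℝ) (i : Fin n)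
    (hw : ∑ a, w i a = 1) (c : O i → ℝ) (hc : ∑ a, c a = 1) (G : (∀ j, O j) → ℝ)
    (hG : ∀ ω a, G (Function.update ω i a) = G ω) :
    (∑ ω : ∀ j, O j, (c (ω i) * ∏ j ∈ Finset.univ.erase i, w j (ω j)) * G ω)
      = ∑ ω : ∀ j, O j, (∏ j, w j (ω j)) * G ω := by
  have hQ : ∀ (ω : ∀ j, O j) (a : O i),
      ((∏ j ∈ Finset.univ.erase i, w j (Function.update ω i a j)) *
        G (Function.update ω i a))
        = (∏ j ∈ Finset.univ.erase i, w j (ω j)) * G ω := by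
    intro ω a
    rw [prod_erase_update, hG]
  have h2 := inv_swap i (w i) c
    (fun ω => (∏ j ∈ Finset.univ.erase i, w j (ω j)) * G ω) hQ
  rw [hw, hc, one_mul, one_mul] at h2
  beta_reduce at h2
  calc (∑ ω : ∀ j, O j, (c (ω i) * ∏ j ∈ Finset.univ.erase i, w j (ω j)) * G ω)
      = ∑ ω : ∀ j, O j, c (ω i) * ((∏ j ∈ Finset.univ.erase i, w j (ω j)) * G ω) := by
        refine Finset.sum_congr rfl fun ω _ => by ring
    _ = ∑ ω : ∀ j, O j, w i (ω i) * ((∏ j ∈ Finset.univ.erase i, w j (ω j)) * G ω) := h2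
    _ = ∑ ω : ∀ j, O j, (∏ j, w j (ω j)) * G ω := by
        refine Finset.sum_congr rfl fun ω _ => ?_
        rw [← Finset.mul_prod_erase Finset.univ (fun j => w j (ω j)) (Finset.mem_univ i)]
        ring


end AuxProb

/-- Proof template for discriminatory pricing: if for every valuation
profile, bidder `i`, and finitely supported distribution over no-overbidding bid
profiles there is a deviation `c ∈ S` with
`E[uᵢ(c, b₋ᵢ)] ≥ λ·vᵢ(xᵢ^v) - μ·E[∑_{j ≤ xᵢ^v} β_j(b₋ᵢ)]`, then the Bayesian Price
of Anarchy of the Discriminatory Auction is at most `max {1, μ} / λ`. -/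
theorem stmt6
    (n k : ℕ) (hk : 1 ≤ k)
    (lam mu : ℝ) (hlam : 0 < lam) (hmu : 0 ≤ mu)
    -- finite type spaces and the product prior
    (T : Fin n → Type) [∀ i, Fintype (T i)]
    (pr : ∀ i, T i → ℝ)
    (hpr0 : ∀ i t, 0 ≤ pr i t) (hpr1 : ∀ i, ∑ t, pr i t = 1)
    -- the (private) valuations
    (val : ∀ i, T i → ℕ → ℝ)
    (hval : ∀ i t, IsValuation k (val i t))
    -- the bidding format: standard or uniform
    (S : Set (Bid k))
    (hS : S = {b : Bid k | StdBid b} ∨ S = {b : Bid k | UnifBid b})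
    -- the allocation rule
    (X : (Fin n → Bid k) → Fin n → ℕ)
    (hX : ∀ b, ValidAlloc b (X b))
    -- a welfare-optimal allocation for each valuation profile
    (xopt : (∀ j, T j) → Fin n → ℕ)
    (hxoptk : ∀ θ, (∑ i, xopt θ i) = k)
    (hxoptmax : ∀ θ (y : Fin n → ℕ), (∑ i, y i) = k →
      SW (fun i => val i (θ i)) y ≤ SW (fun i => val i (θ i)) (xopt θ))
    -- the template hypothesis: for every valuation profile, every bidder `i` and every
    -- finitely supported distribution over no-overbidding profiles from the strategy
    -- spaces, there is a no-overbidding deviation `c ∈ S` with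
    -- `E[uᵢ(c, b₋ᵢ)] ≥ λ·vᵢ(xᵢ^v) - μ·E[∑_{j=1}^{xᵢ^v} β_j(b₋ᵢ)]`
    (hT : ∀ (θ : (∀ j, T j)) (i : Fin n) (P : Type) [Fintype P] (q : P → ℝ),
      (∀ ω, 0 ≤ q ω) → (∑ ω, q ω) = 1 →
      ∀ bo : P → Fin n → Bid k,
        (∀ ω, 0 < q ω → ∀ j, j ≠ i →
          bo ω j ∈ S ∧ ∃ t : T j, NoOverbid (val j t) (bo ω j)) →
        ∃ c ∈ S, NoOverbid (val i (θ i)) c ∧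
          lam * val i (θ i) (xopt θ i)
              - mu * ∑ ω, q ω * betaSum k (othersBids (bo ω) i) (xopt θ i)
            ≤ ∑ ω, q ω * uDisc X (val i (θ i)) i (Function.update (bo ω) i c))
    -- the mixed strategies: finitely supported distributions over bid vectors in `S`
    (O : Fin n → Type) [∀ i, Fintype (O i)]
    (wt : ∀ i, T i → O i → ℝ)
    (hwt0 : ∀ i t ω, 0 ≤ wt i t ω) (hwt1 : ∀ i t, ∑ ω, wt i t ω = 1)
    (B : ∀ i, T i → O i → Bid k)
    (hBS : ∀ i t ω, 0 < wt i t ω → B i t ω ∈ S)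
    -- every bid vector in the support of every equilibrium strategy does not overbid
    (hBno : ∀ i t ω, 0 < wt i t ω → NoOverbid (val i t) (B i t ω))
    -- `B` is a (mixed) Bayes-Nash equilibrium
    (hBNE : ∀ (i : Fin n) (ti : T i), ∀ c ∈ S,
      (∑ θ : (∀ j, T j), ∑ ω : (∀ j, O j),
        ((∏ j, pr j (θ j)) * ∏ j, wt j (Function.update θ i ti j) (ω j)) *
          uDisc X (val i ti) i
            (Function.update (fun j => B j (Function.update θ i ti j) (ω j)) i c))
      ≤ ∑ θ : (∀ j, T j), ∑ ω : (∀ j, O j),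
        ((∏ j, pr j (θ j)) * ∏ j, wt j (Function.update θ i ti j) (ω j)) *
          uDisc X (val i ti) i (fun j => B j (Function.update θ i ti j) (ω j))) :
    (∑ θ : (∀ j, T j), (∏ j, pr j (θ j)) * SW (fun i => val i (θ i)) (xopt θ))
      ≤ (max 1 mu / lam) *
        ∑ θ : (∀ j, T j), ∑ ω : (∀ j, O j),
          ((∏ j, pr j (θ j)) * ∏ j, wt j (θ j) (ω j)) *
            SW (fun i => val i (θ i)) (X (fun j => B j (θ j) (ω j))) := by
  classical
  -- basic positivity / normalization facts
  have hSnn : ∀ b ∈ S, ∀ j : Fin k, 0 ≤ b j := by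
    rcases hS with rfl | rfl
    · intro b hb j; exact hb.2 j
    · intro b hb j
      obtain ⟨c, hc, q, hq, hbj⟩ := hb
      rw [hbj j]
      by_cases h : (j : ℕ) < q <;> simp [h, hc]
  have hpr0' : ∀ θ : ∀ j, T j, (0:ℝ) ≤ ∏ j, pr j (θ j) :=
    fun θ => Finset.prod_nonneg fun j _ => hpr0 j (θ j)
  have hwt0' : ∀ (θ : ∀ j, T j) (ω : ∀ j, O j), (0:ℝ) ≤ ∏ j, wt j (θ j) (ω j) :=
    fun θ ω => Finset.prod_nonneg fun j _ => hwt0 j (θ j) (ω j)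
  have hsum1T : (∑ θ : ∀ j, T j, ∏ j, pr j (θ j)) = 1 := sum_pi_prod_one pr hpr1
  have hposW : ∀ (θ : ∀ j, T j) (ω : ∀ j, O j),
      (0:ℝ) < (∏ j, wt j (θ j) (ω j)) → ∀ j, 0 < wt j (θ j) (ω j) := by
    intro θ ω h j
    rcases lt_or_eq_of_le (hwt0 j (θ j) (ω j)) with h' | h'
    · exact h'
    · exfalso
      rw [Finset.prod_eq_zero (Finset.mem_univ j) h'.symm] at h
      exact lt_irrefl 0 h
  -- the deviation inequality, for each bidder and valuation profile
  have hdev : ∀ (i : Fin n) (θ : ∀ j, T j),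
      lam * val i (θ i) (xopt θ i) ≤
        (∑ σ : ∀ j, T j, ∑ ω : ∀ j, O j,
          ((∏ j, pr j (σ j)) * ∏ j, wt j (Function.update σ i (θ i) j) (ω j)) *
            uDisc X (val i (θ i)) i (fun j => B j (Function.update σ i (θ i) j) (ω j)))
        + mu * (∑ σ : ∀ j, T j, ∑ ω : ∀ j, O j,
          ((∏ j, pr j (σ j)) * ∏ j, wt j (Function.update σ i (θ i) j) (ω j)) *
            betaSum k
              (othersBids (fun j => B j (Function.update σ i (θ i) j) (ω j)) i)
              (xopt θ i)) := by
    intro i θ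
    have hq0 : ∀ p : (∀ j, T j) × (∀ j, O j),
        (0:ℝ) ≤ (∏ j, pr j (p.1 j)) * ∏ j, wt j (Function.update p.1 i (θ i) j) (p.2 j) :=
      fun p => mul_nonneg (hpr0' p.1)
        (Finset.prod_nonneg fun j _ => hwt0 j _ _)
    have hq1 : (∑ p : (∀ j, T j) × (∀ j, O j),
        (∏ j, pr j (p.1 j)) * ∏ j, wt j (Function.update p.1 i (θ i) j) (p.2 j)) = 1 := by
      rw [Fintype.sum_prod_type]
      have h1 : ∀ σ : ∀ j, T j,
          (∑ ω : ∀ j, O j,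
            (∏ j, pr j (σ j)) * ∏ j, wt j (Function.update σ i (θ i) j) (ω j))
          = ∏ j, pr j (σ j) := by
        intro σ
        rw [← Finset.mul_sum,
          sum_pi_prod_one (fun j => wt j (Function.update σ i (θ i) j))
            (fun j => hwt1 j _), mul_one]
      rw [Finset.sum_congr rfl fun σ _ => h1 σ]
      exact hsum1T
    have hsupp : ∀ p : (∀ j, T j) × (∀ j, O j),
        0 < (∏ j, pr j (p.1 j)) * ∏ j, wt j (Function.update p.1 i (θ i) j) (p.2 j) →
        ∀ j, j ≠ i →
          (fun (p : (∀ j, T j) × (∀ j, O j)) (j : Fin n) =>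
            B j (Function.update p.1 i (θ i) j) (p.2 j)) p j ∈ S ∧
          ∃ t : T j, NoOverbid (val j t)
            ((fun (p : (∀ j, T j) × (∀ j, O j)) (j : Fin n) =>
              B j (Function.update p.1 i (θ i) j) (p.2 j)) p j) := by
      intro p hp j hj
      have hb0 : (0:ℝ) ≤ ∏ j, wt j (Function.update p.1 i (θ i) j) (p.2 j) :=
        Finset.prod_nonneg fun j _ => hwt0 j _ _
      have hbpos : (0:ℝ) < ∏ j, wt j (Function.update p.1 i (θ i) j) (p.2 j) := by
        rcases lt_or_eq_of_le hb0 with h' | h'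
        · exact h'
        · exfalso; rw [← h', mul_zero] at hp; exact lt_irrefl 0 hp
      have hfac := hposW (Function.update p.1 i (θ i)) p.2 hbpos j
      rw [Function.update_of_ne hj] at hfac
      refine ⟨?_, ⟨p.1 j, ?_⟩⟩
      · show B j (Function.update p.1 i (θ i) j) (p.2 j) ∈ S
        rw [Function.update_of_ne hj]
        exact hBS j (p.1 j) (p.2 j) hfac
      · show NoOverbid (val j (p.1 j)) (B j (Function.update p.1 i (θ i) j) (p.2 j))
        rw [Function.update_of_ne hj]
        exact hBno j (p.1 j) (p.2 j) hfac
    obtain ⟨c, hcS, hcNo, hineq⟩ := hT θ i ((∀ j, T j) × (∀ j, O j))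
      (fun p => (∏ j, pr j (p.1 j)) * ∏ j, wt j (Function.update p.1 i (θ i) j) (p.2 j))
      hq0 hq1
      (fun p j => B j (Function.update p.1 i (θ i) j) (p.2 j)) hsupp
    have hbne := hBNE i (θ i) c hcS
    simp only [Fintype.sum_prod_type] at hineq
    linarith [hineq, hbne]
  -- marginalization of the equilibrium-utility term
  have hA : ∀ i : Fin n,
      (∑ θ : ∀ j, T j, (∏ j, pr j (θ j)) *
        ∑ σ : ∀ j, T j, ∑ ω : ∀ j, O j,
          ((∏ j, pr j (σ j)) * ∏ j, wt j (Function.update σ i (θ i) j) (ω j)) *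
            uDisc X (val i (θ i)) i (fun j => B j (Function.update σ i (θ i) j) (ω j)))
      = ∑ θ : ∀ j, T j, ∑ ω : ∀ j, O j,
          ((∏ j, pr j (θ j)) * ∏ j, wt j (θ j) (ω j)) *
            uDisc X (val i (θ i)) i (fun j => B j (θ j) (ω j)) := by
    intro i
    have hm := marg pr hpr1 i
      (fun τ => ∑ ω : ∀ j, O j, (∏ j, wt j (τ j) (ω j)) *
        uDisc X (val i (τ i)) i (fun j => B j (τ j) (ω j)))
    simp only [Function.update_self] at hm
    simp only [Finset.mul_sum, mul_assoc] at hm ⊢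
    exact hm
  -- standardization of the beta term
  have hC : ∀ (i : Fin n) (θ : ∀ j, T j),
      (∑ σ : ∀ j, T j, ∑ ω : ∀ j, O j,
        ((∏ j, pr j (σ j)) * ∏ j, wt j (Function.update σ i (θ i) j) (ω j)) *
          betaSum k (othersBids (fun j => B j (Function.update σ i (θ i) j) (ω j)) i)
            (xopt θ i))
      = ∑ σ : ∀ j, T j, ∑ ω : ∀ j, O j,
        ((∏ j, pr j (σ j)) * ∏ j, wt j (σ j) (ω j)) *
          betaSum k (othersBids (fun j => B j (σ j) (ω j)) i) (xopt θ i) := by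
    intro i θ
    refine Finset.sum_congr rfl fun σ _ => ?_
    have hOB : ∀ ω : ∀ j, O j,
        othersBids (fun j => B j (Function.update σ i (θ i) j) (ω j)) i
          = othersBids (fun j => B j (σ j) (ω j)) i := by
      intro ω
      refine othersBids_congr _ _ i fun j hj => ?_
      rw [Function.update_of_ne hj]
    have hfac : ∀ ω : ∀ j, O j,
        (∏ j, wt j (Function.update σ i (θ i) j) (ω j))
          = wt i (θ i) (ω i) * ∏ j ∈ Finset.univ.erase i, wt j (σ j) (ω j) := by
      intro ω
      rw [← Finset.mul_prod_erase Finset.univ _ (Finset.mem_univ i)]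
      congr 1
      · rw [Function.update_self]
      · exact Finset.prod_congr rfl fun j hj => by
          rw [Function.update_of_ne (Finset.ne_of_mem_erase hj)]
    have hGinv : ∀ (ω : ∀ j, O j) (a : O i),
        betaSum k (othersBids (fun j => B j (σ j) (Function.update ω i a j)) i) (xopt θ i)
          = betaSum k (othersBids (fun j => B j (σ j) (ω j)) i) (xopt θ i) := by
      intro ω a
      congr 1
      refine othersBids_congr _ _ i fun j hj => ?_
      rw [Function.update_of_ne hj]
    have hrep := repl_left (fun j => wt j (σ j)) i (hwt1 i (σ i)) (wt i (θ i))
      (hwt1 i (θ i))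
      (fun ω => betaSum k (othersBids (fun j => B j (σ j) (ω j)) i) (xopt θ i)) hGinv
    calc (∑ ω : ∀ j, O j,
          ((∏ j, pr j (σ j)) * ∏ j, wt j (Function.update σ i (θ i) j) (ω j)) *
            betaSum k (othersBids (fun j => B j (Function.update σ i (θ i) j) (ω j)) i)
              (xopt θ i))
        = (∏ j, pr j (σ j)) * ∑ ω : ∀ j, O j,
            (wt i (θ i) (ω i) * ∏ j ∈ Finset.univ.erase i, wt j (σ j) (ω j)) *
              betaSum k (othersBids (fun j => B j (σ j) (ω j)) i) (xopt θ i) := by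
          rw [Finset.mul_sum]
          refine Finset.sum_congr rfl fun ω _ => ?_
          rw [hOB ω, hfac ω]
          ring
      _ = (∏ j, pr j (σ j)) * ∑ ω : ∀ j, O j,
            (∏ j, wt j (σ j) (ω j)) *
              betaSum k (othersBids (fun j => B j (σ j) (ω j)) i) (xopt θ i) := by
          rw [hrep]
      _ = ∑ ω : ∀ j, O j,
            ((∏ j, pr j (σ j)) * ∏ j, wt j (σ j) (ω j)) *
              betaSum k (othersBids (fun j => B j (σ j) (ω j)) i) (xopt θ i) := by
          rw [Finset.mul_sum]
          refine Finset.sum_congr rfl fun ω _ => by ring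
  -- pointwise (per bid-profile) bounds
  have hCore : ∀ (θ' σ : ∀ j, T j) (ω : ∀ j, O j), 0 < (∏ j, wt j (σ j) (ω j)) →
      (∑ i, betaSum k (othersBids (fun j => B j (σ j) (ω j)) i) (xopt θ' i))
        ≤ ∑ i, winSum (B i (σ i) (ω i)) (X (fun j => B j (σ j) (ω j)) i) := by
    intro θ' σ ω hpos
    have hb : ∀ (i : Fin n) (j : Fin k), 0 ≤ B i (σ i) (ω i) j :=
      fun i j => hSnn _ (hBS i (σ i) (ω i) (hposW σ ω hpos i)) j
    exact core (fun j => B j (σ j) (ω j)) hb _ (xopt θ')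
      (hX (fun j => B j (σ j) (ω j))).1 (hX (fun j => B j (σ j) (ω j))).2 (hxoptk θ')
  have hXle : ∀ (b : Fin n → Bid k) (i : Fin n), X b i ≤ k := by
    intro b i
    rw [← (hX b).1]
    exact Finset.single_le_sum (fun i _ => Nat.zero_le _) (Finset.mem_univ i)
  have hPay : ∀ (σ : ∀ j, T j) (ω : ∀ j, O j), 0 < (∏ j, wt j (σ j) (ω j)) →
      (∑ i, winSum (B i (σ i) (ω i)) (X (fun j => B j (σ j) (ω j)) i))
        ≤ SW (fun i => val i (σ i)) (X (fun j => B j (σ j) (ω j))) := by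
    intro σ ω hpos
    refine Finset.sum_le_sum fun i _ => ?_
    exact winSum_le_val _ (hval i (σ i)) _ (hBno i (σ i) (ω i) (hposW σ ω hpos i))
      (hXle _ i)
  have hPay0 : ∀ (σ : ∀ j, T j) (ω : ∀ j, O j), 0 < (∏ j, wt j (σ j) (ω j)) →
      0 ≤ ∑ i, winSum (B i (σ i) (ω i)) (X (fun j => B j (σ j) (ω j)) i) := by
    intro σ ω hpos
    refine Finset.sum_nonneg fun i _ => ?_
    exact winSum_nonneg' _ (fun j => hSnn _ (hBS i (σ i) (ω i) (hposW σ ω hpos i)) j) _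
  have hSW0 : ∀ (σ : ∀ j, T j) (x : Fin n → ℕ), 0 ≤ SW (fun i => val i (σ i)) x :=
    fun σ x => Finset.sum_nonneg fun i _ => (hval i (σ i)).2.1 _
  -- global quantities
  set ESW : ℝ := ∑ θ : ∀ j, T j, ∑ ω : ∀ j, O j,
      ((∏ j, pr j (θ j)) * ∏ j, wt j (θ j) (ω j)) *
        SW (fun i => val i (θ i)) (X (fun j => B j (θ j) (ω j))) with hESWdef
  set EP : ℝ := ∑ θ : ∀ j, T j, ∑ ω : ∀ j, O j,
      ((∏ j, pr j (θ j)) * ∏ j, wt j (θ j) (ω j)) *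
        (∑ i, winSum (B i (θ i) (ω i)) (X (fun j => B j (θ j) (ω j)) i)) with hEPdef
  have hwtsplit : ∀ (θ : ∀ j, T j) (ω : ∀ j, O j) (F G : ℝ),
      (0 < (∏ j, wt j (θ j) (ω j)) → F ≤ G) →
      ((∏ j, pr j (θ j)) * ∏ j, wt j (θ j) (ω j)) * F
        ≤ ((∏ j, pr j (θ j)) * ∏ j, wt j (θ j) (ω j)) * G := by
    intro θ ω F G hFG
    rcases lt_or_eq_of_le (hwt0' θ ω) with h | h
    · exact mul_le_mul_of_nonneg_left (hFG h) (mul_nonneg (hpr0' θ) (hwt0' θ ω))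
    · rw [← h, mul_zero, zero_mul, zero_mul]
  have hEP0 : 0 ≤ EP := by
    rw [hEPdef]
    refine Finset.sum_nonneg fun θ _ => Finset.sum_nonneg fun ω _ => ?_
    rcases lt_or_eq_of_le (hwt0' θ ω) with h | h
    · exact mul_nonneg (mul_nonneg (hpr0' θ) (hwt0' θ ω)) (hPay0 θ ω h)
    · rw [← h, mul_zero, zero_mul]
  have hEPle : EP ≤ ESW := by
    rw [hEPdef, hESWdef]
    refine Finset.sum_le_sum fun θ _ => Finset.sum_le_sum fun ω _ => ?_
    exact hwtsplit θ ω _ _ (hPay θ ω)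
  have hESW0 : 0 ≤ ESW := by
    rw [hESWdef]
    refine Finset.sum_nonneg fun θ _ => Finset.sum_nonneg fun ω _ => ?_
    exact mul_nonneg (mul_nonneg (hpr0' θ) (hwt0' θ ω)) (hSW0 θ _)
  -- total equilibrium utility
  have hUsum : (∑ i : Fin n, ∑ θ : ∀ j, T j, ∑ ω : ∀ j, O j,
      ((∏ j, pr j (θ j)) * ∏ j, wt j (θ j) (ω j)) *
        uDisc X (val i (θ i)) i (fun j => B j (θ j) (ω j))) = ESW - EP := by
    rw [hESWdef, hEPdef, Finset.sum_comm, ← Finset.sum_sub_distrib]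
    refine Finset.sum_congr rfl fun θ _ => ?_
    rw [Finset.sum_comm, ← Finset.sum_sub_distrib]
    refine Finset.sum_congr rfl fun ω _ => ?_
    simp only [uDisc, SW]
    rw [← mul_sub, ← Finset.sum_sub_distrib, Finset.mul_sum]
  -- total beta term is bounded by total payments
  have hCB : ∀ θ' : ∀ j, T j,
      (∑ i : Fin n, ∑ σ : ∀ j, T j, ∑ ω : ∀ j, O j,
        ((∏ j, pr j (σ j)) * ∏ j, wt j (σ j) (ω j)) *
          betaSum k (othersBids (fun j => B j (σ j) (ω j)) i) (xopt θ' i)) ≤ EP := by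
    intro θ'
    rw [hEPdef, Finset.sum_comm]
    refine Finset.sum_le_sum fun σ _ => ?_
    rw [Finset.sum_comm]
    refine Finset.sum_le_sum fun ω _ => ?_
    rw [← Finset.mul_sum]
    exact hwtsplit σ ω _ _ (hCore θ' σ ω)
  -- per-profile deviation bound, summed over bidders
  have step1 : ∀ θ : ∀ j, T j,
      lam * SW (fun i => val i (θ i)) (xopt θ) ≤
        (∑ i : Fin n, ∑ σ : ∀ j, T j, ∑ ω : ∀ j, O j,
          ((∏ j, pr j (σ j)) * ∏ j, wt j (Function.update σ i (θ i) j) (ω j)) *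
            uDisc X (val i (θ i)) i (fun j => B j (Function.update σ i (θ i) j) (ω j)))
        + mu * (∑ i : Fin n, ∑ σ : ∀ j, T j, ∑ ω : ∀ j, O j,
          ((∏ j, pr j (σ j)) * ∏ j, wt j (σ j) (ω j)) *
            betaSum k (othersBids (fun j => B j (σ j) (ω j)) i) (xopt θ i)) := by
    intro θ
    have h1 : lam * SW (fun i => val i (θ i)) (xopt θ)
        = ∑ i : Fin n, lam * val i (θ i) (xopt θ i) := by
      simp only [SW, Finset.mul_sum]
    rw [h1]
    have h2 := Finset.sum_le_sum fun i (_ : i ∈ Finset.univ) => hdev i θ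
    rw [Finset.sum_add_distrib] at h2
    refine le_trans h2 (le_of_eq ?_)
    congr 1
    rw [Finset.mul_sum]
    exact Finset.sum_congr rfl fun i _ => by rw [hC i θ]
  -- put everything together
  have step2 : lam * (∑ θ : ∀ j, T j,
      (∏ j, pr j (θ j)) * SW (fun i => val i (θ i)) (xopt θ)) ≤ (ESW - EP) + mu * EP := by
    calc lam * (∑ θ : ∀ j, T j, (∏ j, pr j (θ j)) * SW (fun i => val i (θ i)) (xopt θ))
        = ∑ θ : ∀ j, T j, (∏ j, pr j (θ j)) *
            (lam * SW (fun i => val i (θ i)) (xopt θ)) := by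
          rw [Finset.mul_sum]
          exact Finset.sum_congr rfl fun θ _ => by ring
      _ ≤ ∑ θ : ∀ j, T j, (∏ j, pr j (θ j)) *
            ((∑ i : Fin n, ∑ σ : ∀ j, T j, ∑ ω : ∀ j, O j,
              ((∏ j, pr j (σ j)) * ∏ j, wt j (Function.update σ i (θ i) j) (ω j)) *
                uDisc X (val i (θ i)) i
                  (fun j => B j (Function.update σ i (θ i) j) (ω j)))
            + mu * (∑ i : Fin n, ∑ σ : ∀ j, T j, ∑ ω : ∀ j, O j,
              ((∏ j, pr j (σ j)) * ∏ j, wt j (σ j) (ω j)) *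
                betaSum k (othersBids (fun j => B j (σ j) (ω j)) i) (xopt θ i))) :=
          Finset.sum_le_sum fun θ _ =>
            mul_le_mul_of_nonneg_left (step1 θ) (hpr0' θ)
      _ = (∑ θ : ∀ j, T j, (∏ j, pr j (θ j)) *
            ∑ i : Fin n, ∑ σ : ∀ j, T j, ∑ ω : ∀ j, O j,
              ((∏ j, pr j (σ j)) * ∏ j, wt j (Function.update σ i (θ i) j) (ω j)) *
                uDisc X (val i (θ i)) i
                  (fun j => B j (Function.update σ i (θ i) j) (ω j)))
          + mu * ∑ θ : ∀ j, T j, (∏ j, pr j (θ j)) *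
              ∑ i : Fin n, ∑ σ : ∀ j, T j, ∑ ω : ∀ j, O j,
                ((∏ j, pr j (σ j)) * ∏ j, wt j (σ j) (ω j)) *
                  betaSum k (othersBids (fun j => B j (σ j) (ω j)) i) (xopt θ i) := by
          rw [Finset.mul_sum, ← Finset.sum_add_distrib]
          exact Finset.sum_congr rfl fun θ _ => by ring
      _ ≤ (ESW - EP) + mu * EP := by
          refine add_le_add (le_of_eq ?_) (mul_le_mul_of_nonneg_left ?_ hmu)
          · calc (∑ θ : ∀ j, T j, (∏ j, pr j (θ j)) *
                ∑ i : Fin n, ∑ σ : ∀ j, T j, ∑ ω : ∀ j, O j,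
                  ((∏ j, pr j (σ j)) * ∏ j, wt j (Function.update σ i (θ i) j) (ω j)) *
                    uDisc X (val i (θ i)) i
                      (fun j => B j (Function.update σ i (θ i) j) (ω j)))
                = ∑ θ : ∀ j, T j, ∑ i : Fin n, (∏ j, pr j (θ j)) *
                    ∑ σ : ∀ j, T j, ∑ ω : ∀ j, O j,
                      ((∏ j, pr j (σ j)) * ∏ j, wt j (Function.update σ i (θ i) j) (ω j)) *
                        uDisc X (val i (θ i)) i
                          (fun j => B j (Function.update σ i (θ i) j) (ω j)) := by
                  exact Finset.sum_congr rfl fun θ _ => Finset.mul_sum _ _ _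
              _ = ∑ i : Fin n, ∑ θ : ∀ j, T j, (∏ j, pr j (θ j)) *
                    ∑ σ : ∀ j, T j, ∑ ω : ∀ j, O j,
                      ((∏ j, pr j (σ j)) * ∏ j, wt j (Function.update σ i (θ i) j) (ω j)) *
                        uDisc X (val i (θ i)) i
                          (fun j => B j (Function.update σ i (θ i) j) (ω j)) :=
                  Finset.sum_comm
              _ = ∑ i : Fin n, ∑ θ : ∀ j, T j, ∑ ω : ∀ j, O j,
                    ((∏ j, pr j (θ j)) * ∏ j, wt j (θ j) (ω j)) *
                      uDisc X (val i (θ i)) i (fun j => B j (θ j) (ω j)) :=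
                  Finset.sum_congr rfl fun i _ => hA i
              _ = ESW - EP := hUsum
          · calc (∑ θ : ∀ j, T j, (∏ j, pr j (θ j)) *
                ∑ i : Fin n, ∑ σ : ∀ j, T j, ∑ ω : ∀ j, O j,
                  ((∏ j, pr j (σ j)) * ∏ j, wt j (σ j) (ω j)) *
                    betaSum k (othersBids (fun j => B j (σ j) (ω j)) i) (xopt θ i))
                ≤ ∑ θ : ∀ j, T j, (∏ j, pr j (θ j)) * EP :=
                  Finset.sum_le_sum fun θ _ =>
                    mul_le_mul_of_nonneg_left (hCB θ) (hpr0' θ)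
              _ = EP := by rw [← Finset.sum_mul, hsum1T, one_mul]
  -- conclude
  have hfin : lam * (∑ θ : ∀ j, T j,
      (∏ j, pr j (θ j)) * SW (fun i => val i (θ i)) (xopt θ)) ≤ max 1 mu * ESW := by
    have hr : (ESW - EP) + mu * EP = ESW + (mu - 1) * EP := by ring
    rcases le_total mu 1 with h | h
    · have h1 : (mu - 1) * EP ≤ 0 := mul_nonpos_of_nonpos_of_nonneg (by linarith) hEP0
      have h2 : max 1 mu = 1 := max_eq_left h
      rw [h2, one_mul]
      linarith
    · have h2 : max 1 mu = mu := max_eq_right h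
      rw [h2]
      have h1 : (mu - 1) * EP ≤ (mu - 1) * ESW :=
        mul_le_mul_of_nonneg_left hEPle (by linarith)
      have hr2 : ESW + (mu - 1) * ESW = mu * ESW := by ring
      linarith
  rw [div_mul_eq_mul_div, le_div_iff₀ hlam]
  calc (∑ θ : ∀ j, T j, (∏ j, pr j (θ j)) * SW (fun i => val i (θ i)) (xopt θ)) * lam
      = lam * ∑ θ : ∀ j, T j, (∏ j, pr j (θ j)) * SW (fun i => val i (θ i)) (xopt θ) :=
        mul_comm _ _
    _ ≤ max 1 mu * ESW := hfin





end
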